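/- In the Suzy and Billy model with epistemic state K = {u : u ⊨ (U_BS ∧ U_BT) ∨ (U_BS ∧ U_SS ∧ U_ST)}, the conjunction BS = 1 ∧ SS = 1 is a modified HP explanation of BB = 1, but no potential Borner explanation of BB = 1 mentions the variable BS. -/

import Mathlib

namespace Causal

/-- A causal model: a structural equation for each endogenous variable,
    taking a context (setting of exogenous variables) and a setting of the
    endogenous variables. -/
structure Model (Vu Vv : Type) (Du : Vu → Type) (Dv : Vv → Type) where
  F : (i : Vv) → ((u : Vu) → Du u) → ((j : Vv) → Dv j) → Dv i

variable {Vu Vv : Type} {Du : Vu → Type} {Dv : Vv → Type}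

abbrev Ctx (Du : Vu → Type) := (u : Vu) → Du u
abbrev World (Dv : Vv → Type) := (i : Vv) → Dv i
abbrev Event (Dv : Vv → Type) := World Dv → Prop
/-- A conjunction of primitive events X = x, as a partial assignment. -/
abbrev PA (Dv : Vv → Type) := (i : Vv) → Option (Dv i)

/-- Acyclicity: a well-founded strict order such that each structural equation
    depends only on endogenous variables strictly below it. -/
def Model.Acyclic (M : Model Vu Vv Du Dv) : Prop :=
  ∃ r : Vv → Vv → Prop, WellFounded r ∧
    ∀ (i : Vv) (u : Ctx Du) (s s' : World Dv),
      (∀ j, r j i → s j = s' j) → M.F i u s = M.F i u s'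

/-- s is a solution of the causal setting (M, u). -/
def Model.Solves (M : Model Vu Vv Du Dv) (u : Ctx Du) (s : World Dv) : Prop :=
  ∀ i, s i = M.F i u s

/-- (M, u) ⊨ φ : every solution (in particular the unique actual world) satisfies φ. -/
def Model.sat (M : Model Vu Vv Du Dv) (u : Ctx Du) (φ : Event Dv) : Prop :=
  ∀ s, M.Solves u s → φ s

namespace PA

def event (g : PA Dv) : Event Dv := fun s => ∀ i v, g i = some v → s i = v

def subset (g h : PA Dv) : Prop := ∀ i v, g i = some v → h i = some v

def ssubset (g h : PA Dv) : Prop := subset g h ∧ g ≠ h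

def union (g h : PA Dv) : PA Dv := fun i => (g i).orElse (fun _ => h i)

def sameDom (g h : PA Dv) : Prop := ∀ i, (g i).isSome ↔ (h i).isSome

def Nonempty (g : PA Dv) : Prop := ∃ i, (g i).isSome

def disjoint (g h : PA Dv) : Prop := ∀ i, (g i).isSome → h i = none

/-- Pointwise difference condition: x_i ≠ x_i' for each X_i ∈ X. -/
def diff (g h : PA Dv) : Prop := ∀ i v v', g i = some v → h i = some v' → v ≠ v'

end PA

/-- Intervention M_{X←x}. -/
def Model.intervene (M : Model Vu Vv Du Dv) (g : PA Dv) : Model Vu Vv Du Dv where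
  F i u s := (g i).getD (M.F i u s)

/-- AC1 : (M,u) ⊨ (X = x) ∧ φ. -/
def AC1 (M : Model Vu Vv Du Dv) (u : Ctx Du) (g : PA Dv) (φ : Event Dv) : Prop :=
  M.sat u (fun s => g.event s ∧ φ s)

/-- AC2 : there are W ⊆ V (with its actual setting w) and a setting x' of X with
    (M,u) ⊨ [X ← x', W ← w]¬φ. -/
def AC2 (M : Model Vu Vv Du Dv) (u : Ctx Du) (g : PA Dv) (φ : Event Dv) : Prop :=
  ∃ w x' : PA Dv, x'.sameDom g ∧ M.sat u w.event ∧
    (M.intervene (x'.union w)).sat u (fun s => ¬ φ s)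

/-- Weak actual cause: AC1–AC2. -/
def WeakCause (M : Model Vu Vv Du Dv) (u : Ctx Du) (g : PA Dv) (φ : Event Dv) : Prop :=
  AC1 M u g φ ∧ AC2 M u g φ

/-- Actual cause: AC1–AC3. -/
def ActualCause (M : Model Vu Vv Du Dv) (u : Ctx Du) (g : PA Dv) (φ : Event Dv) : Prop :=
  WeakCause M u g φ ∧ ∀ h : PA Dv, h.ssubset g → ¬ WeakCause M u h φ

/-- X = x is a partial cause (subset of a cause) w.r.t. a notion of cause. -/
def PartialCause (Cause : Model Vu Vv Du Dv → Ctx Du → PA Dv → Event Dv → Prop)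
    (M : Model Vu Vv Du Dv) (u : Ctx Du) (g : PA Dv) (φ : Event Dv) : Prop :=
  ∃ h : PA Dv, g.subset h ∧ Cause M u h φ

/-- Some conjunct of g is part of an actual cause of φ. -/
def IntersectsActualCause (M : Model Vu Vv Du Dv) (u : Ctx Du) (g : PA Dv) (φ : Event Dv) : Prop :=
  ∃ (i : Vv) (v : Dv i) (c : PA Dv), g i = some v ∧ c i = some v ∧ ActualCause M u c φ

/-- Sufficient cause, clauses SC1–SC3. -/
def SuffCauseCore (M : Model Vu Vv Du Dv) (u : Ctx Du) (g : PA Dv) (φ : Event Dv) : Prop :=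
  AC1 M u g φ ∧ IntersectsActualCause M u g φ ∧
    ∀ u' : Ctx Du, (M.intervene g).sat u' φ

/-- Sufficient cause: SC1–SC4. -/
def SuffCause (M : Model Vu Vv Du Dv) (u : Ctx Du) (g : PA Dv) (φ : Event Dv) : Prop :=
  SuffCauseCore M u g φ ∧ ∀ h : PA Dv, h.ssubset g → ¬ SuffCauseCore M u h φ

/-! ### Original HP explanations -/

/-- EX2 : g is a weak actual cause of φ in every plausible context where g holds. -/
def EX2 (M : Model Vu Vv Du Dv) (K : Set (Ctx Du)) (g : PA Dv) (φ : Event Dv) : Prop :=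
  ∀ u ∈ K, M.sat u g.event → WeakCause M u g φ

/-- Original HP explanation: EX1–EX4. -/
def OrigExpl (M : Model Vu Vv Du Dv) (K : Set (Ctx Du)) (g : PA Dv) (φ : Event Dv) : Prop :=
  (∀ u ∈ K, M.sat u φ) ∧
  EX2 M K g φ ∧
  (∀ h : PA Dv, h.ssubset g → ¬ EX2 M K h φ) ∧
  ((∃ u ∈ K, M.sat u (fun s => ¬ g.event s)) ∧ (∃ u' ∈ K, M.sat u' g.event))

/-! ### Modified HP explanations -/

/-- EX1' : (a) g intersects an actual cause in any plausible context where g and φ hold,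
    and (b) g is sufficient to bring about φ in any plausible context. -/
def EX1' (M : Model Vu Vv Du Dv) (K : Set (Ctx Du)) (g : PA Dv) (φ : Event Dv) : Prop :=
  ∀ u ∈ K,
    (M.sat u (fun s => g.event s ∧ φ s) → IntersectsActualCause M u g φ) ∧
    (M.intervene g).sat u φ

/-- Modified HP explanation: EX1'–EX3'. -/
def ModExpl (M : Model Vu Vv Du Dv) (K : Set (Ctx Du)) (g : PA Dv) (φ : Event Dv) : Prop :=
  EX1' M K g φ ∧
  (∀ h : PA Dv, h.ssubset g → ¬ EX1' M K h φ) ∧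
  (∃ u ∈ K, M.sat u (fun s => g.event s ∧ φ s))

/-- EX4' : non-triviality. -/
def EX4' (M : Model Vu Vv Du Dv) (K : Set (Ctx Du)) (g : PA Dv) (φ : Event Dv) : Prop :=
  ∃ u ∈ K, M.sat u (fun s => ¬ g.event s ∧ φ s)

/-- Non-trivial modified HP explanation: EX1'–EX4'. -/
def ModExplNT (M : Model Vu Vv Du Dv) (K : Set (Ctx Du)) (g : PA Dv) (φ : Event Dv) : Prop :=
  ModExpl M K g φ ∧ EX4' M K g φ

/-! ### Borner explanations -/

/-- E1–E2, with witness S = s. -/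
def BornerE12With (M : Model Vu Vv Du Dv) (K : Set (Ctx Du)) (g s : PA Dv) (φ : Event Dv) : Prop :=
  g.disjoint s ∧
  ∀ u ∈ K, (M.sat u g.event → SuffCause M u (g.union s) φ) ∧ M.sat u s.event

def BornerE12 (M : Model Vu Vv Du Dv) (K : Set (Ctx Du)) (g : PA Dv) (φ : Event Dv) : Prop :=
  ∃ s : PA Dv, BornerE12With M K g s φ

/-- Potential Borner explanation: E1–E4. -/
def PotBorner (M : Model Vu Vv Du Dv) (K : Set (Ctx Du)) (g : PA Dv) (φ : Event Dv) : Prop :=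
  BornerE12 M K g φ ∧
  (∃ u ∈ K, M.sat u (fun s => g.event s ∧ φ s)) ∧
  (∃ u ∈ K, M.sat u (fun s => ¬ g.event s ∧ φ s))

/-- Parsimonious potential Borner explanation: E1–E4, E6. -/
def ParsPotBorner (M : Model Vu Vv Du Dv) (K : Set (Ctx Du)) (g : PA Dv) (φ : Event Dv) : Prop :=
  PotBorner M K g φ ∧ ∀ h : PA Dv, h.ssubset g → ¬ BornerE12 M K h φ

/-- Actual Borner explanation: E1–E3, E5. -/
def ActBorner (M : Model Vu Vv Du Dv) (K : Set (Ctx Du)) (g : PA Dv) (φ : Event Dv) : Prop :=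
  BornerE12 M K g φ ∧
  (∃ u ∈ K, M.sat u (fun s => g.event s ∧ φ s)) ∧
  (∀ u ∈ K, M.sat u (fun s => g.event s ∧ φ s))

/-! ### Contrastive causes (CC1–CC5), parameterised by a notion of cause -/

/-- CC1–CC4 for the pair ⟨g, g'⟩ and ⟨φ, ψ⟩. -/
def CCcore (Cause : Model Vu Vv Du Dv → Ctx Du → PA Dv → Event Dv → Prop)
    (M : Model Vu Vv Du Dv) (u : Ctx Du) (g g' : PA Dv) (φ ψ : Event Dv) : Prop :=
  g.sameDom g' ∧
  PartialCause Cause M u g φ ∧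
  M.sat u (fun s => ¬ ψ s) ∧
  (∃ w : PA Dv, w.Nonempty ∧ PartialCause Cause (M.intervene w) u g' ψ) ∧
  g.diff g'

/-- Contrastive cause: CC1–CC5. -/
def ContrastiveCause (Cause : Model Vu Vv Du Dv → Ctx Du → PA Dv → Event Dv → Prop)
    (M : Model Vu Vv Du Dv) (u : Ctx Du) (g g' : PA Dv) (φ ψ : Event Dv) : Prop :=
  CCcore Cause M u g g' φ ψ ∧
  ∀ h h' : PA Dv, g.subset h → g'.subset h' → CCcore Cause M u h h' φ ψ → h = g ∧ h' = g'

/-- Strict refinement of a pair (used for pair-minimality clauses). -/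
def PairSSub (h h' g g' : PA Dv) : Prop :=
  PA.subset h g ∧ PA.subset h' g' ∧ ¬ (h = g ∧ h' = g')

/-! ### Miller contrastive explanations (CE1–CE4) -/

/-- CE2 : contrastive weak actual cause in every plausible context where g holds. -/
def CE2 (M : Model Vu Vv Du Dv) (K : Set (Ctx Du)) (g g' : PA Dv) (φ ψ : Event Dv) : Prop :=
  ∀ u ∈ K, M.sat u g.event → ContrastiveCause WeakCause M u g g' φ ψ

/-- Miller contrastive explanation: CE1–CE4. -/
def MillerCE (M : Model Vu Vv Du Dv) (K : Set (Ctx Du)) (g g' : PA Dv) (φ ψ : Event Dv) : Prop :=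
  (∀ u ∈ K, M.sat u (fun s => φ s ∧ ¬ ψ s)) ∧
  CE2 M K g g' φ ψ ∧
  (∀ h h' : PA Dv, PairSSub h h' g g' → ¬ CE2 M K h h' φ ψ) ∧
  (((∃ u ∈ K, M.sat u (fun s => ¬ g.event s)) ∧ (∃ u' ∈ K, M.sat u' g.event)) ∧
   (∃ w : PA Dv, w.Nonempty ∧ w ≠ g ∧
     (∃ u ∈ K, (M.intervene w).sat u (fun s => ¬ g'.event s)) ∧
     (∃ u' ∈ K, (M.intervene w).sat u' g'.event)))

/-! ### Modular contrastive explanations (Definition 3), parameterised by a notion of explanation -/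

/-- CE1'–CE3'. -/
def ModularCore (Expl : Model Vu Vv Du Dv → Set (Ctx Du) → PA Dv → Event Dv → Prop)
    (M : Model Vu Vv Du Dv) (K : Set (Ctx Du)) (g g' : PA Dv) (φ ψ : Event Dv) : Prop :=
  g.sameDom g' ∧
  (∃ h : PA Dv, g.subset h ∧ Expl M K h φ) ∧
  (∃ w : PA Dv, w.Nonempty ∧ ∃ h : PA Dv, g'.subset h ∧ Expl (M.intervene w) K h ψ) ∧
  g.diff g'

/-- Modular contrastive explanation: CE1'–CE4'. -/
def Modular (Expl : Model Vu Vv Du Dv → Set (Ctx Du) → PA Dv → Event Dv → Prop)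
    (M : Model Vu Vv Du Dv) (K : Set (Ctx Du)) (g g' : PA Dv) (φ ψ : Event Dv) : Prop :=
  ModularCore Expl M K g g' φ ψ ∧
  ∀ h h' : PA Dv, g.subset h → g'.subset h' → ModularCore Expl M K h h' φ ψ → h = g ∧ h' = g'

/-! ### Modified HP contrastive explanations (Definition 1: CH1–CH4) -/

/-- CH1(a)–(c) for a single context u. -/
def CH1abc (M : Model Vu Vv Du Dv) (u : Ctx Du) (g g' : PA Dv) (φ ψ : Event Dv) : Prop :=
  (M.sat u (fun s => g.event s ∧ φ s ∧ ¬ ψ s) →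
    ∃ (i : Vv) (v v' : Dv i) (c c' : PA Dv), g i = some v ∧ g' i = some v' ∧
      c i = some v ∧ c' i = some v' ∧ ContrastiveCause ActualCause M u c c' φ ψ) ∧
  (∃ s s' : PA Dv, s.sameDom s' ∧ g.disjoint s ∧
    (M.intervene (g.union s)).sat u φ ∧
    (∃ w : PA Dv, w.Nonempty ∧ w ≠ g ∧
      ((M.intervene w).intervene (g'.union s')).sat u ψ)) ∧
  g.diff g'

/-- CH1 : for each u ∈ K, (a)–(c) and maximality (d). -/
def CH1 (M : Model Vu Vv Du Dv) (K : Set (Ctx Du)) (g g' : PA Dv) (φ ψ : Event Dv) : Prop :=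
  ∀ u ∈ K, CH1abc M u g g' φ ψ ∧
    ∀ h h' : PA Dv, g.subset h → g'.subset h' → CH1abc M u h h' φ ψ → h = g ∧ h' = g'

/-- Modified HP contrastive explanation: CH1–CH3. -/
def ModCE (M : Model Vu Vv Du Dv) (K : Set (Ctx Du)) (g g' : PA Dv) (φ ψ : Event Dv) : Prop :=
  CH1 M K g g' φ ψ ∧
  (∀ h h' : PA Dv, PairSSub h h' g g' → ¬ CH1 M K h h' φ ψ) ∧
  (∃ u ∈ K, M.sat u (fun s => g.event s ∧ φ s ∧ ¬ ψ s))

/-- CH4 : non-triviality. -/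
def CH4 (M : Model Vu Vv Du Dv) (K : Set (Ctx Du)) (g g' : PA Dv) (φ ψ : Event Dv) : Prop :=
  (∃ u ∈ K, M.sat u (fun s => ¬ g.event s ∧ φ s)) ∧
  (∃ w : PA Dv, w.Nonempty ∧ w ≠ g ∧
    ∃ u ∈ K, (M.intervene w).sat u (fun s => ¬ g'.event s ∧ ψ s))

/-! ### Borner contrastive explanations (Definition 2: CB1–CB6) -/

/-- CB1–CB2 with witness pair ⟨S = s, S = s'⟩. -/
def CB12With (M : Model Vu Vv Du Dv) (K : Set (Ctx Du)) (g g' s s' : PA Dv) (φ ψ : Event Dv) : Prop :=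
  s.sameDom s' ∧ g.disjoint s ∧
  ∀ u ∈ K,
    (M.sat u g.event → ContrastiveCause SuffCause M u (g.union s) (g'.union s') φ ψ) ∧
    M.sat u s.event ∧
    (∃ w : PA Dv, w.Nonempty ∧ w ≠ g ∧ (M.intervene w).sat u s'.event)

def CB12 (M : Model Vu Vv Du Dv) (K : Set (Ctx Du)) (g g' : PA Dv) (φ ψ : Event Dv) : Prop :=
  ∃ s s' : PA Dv, CB12With M K g g' s s' φ ψ

/-- Potential Borner contrastive explanation: CB1–CB4. -/
def PotBornerCE (M : Model Vu Vv Du Dv) (K : Set (Ctx Du)) (g g' : PA Dv) (φ ψ : Event Dv) : Prop :=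
  CB12 M K g g' φ ψ ∧
  (∃ u ∈ K, M.sat u (fun s => g.event s ∧ φ s ∧ ¬ ψ s)) ∧
  CH4 M K g g' φ ψ

/-- Actual Borner contrastive explanation: CB1–CB3, CB5. -/
def ActBornerCE (M : Model Vu Vv Du Dv) (K : Set (Ctx Du)) (g g' : PA Dv) (φ ψ : Event Dv) : Prop :=
  CB12 M K g g' φ ψ ∧
  (∃ u ∈ K, M.sat u (fun s => g.event s ∧ φ s ∧ ¬ ψ s)) ∧
  (∀ u ∈ K, M.sat u (fun s => g.event s ∧ φ s ∧ ¬ ψ s))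

end Causal

namespace SB
open Causal

inductive XU | uSS | uST | uBS | uBT
  deriving DecidableEq
inductive XV | SS | ST | SH | BS | BT | BH | BB
  deriving DecidableEq

/-- The Suzy and Billy model: SS := U_SS, ST := U_ST, BS := U_BS, BT := U_BT,
    SH := SS ∧ ST, BH := (BS ∧ BT) ∧ ¬SH, BB := SH ∨ BH. -/
def M : Model XU XV (fun _ => Bool) (fun _ => Bool) where
  F i u s :=
    match i with
    | .SS => u .uSS
    | .ST => u .uST
    | .BS => u .uBS
    | .BT => u .uBT
    | .SH => s .SS && s .ST
    | .BH => (s .BS && s .BT) && !(s .SH)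
    | .BB => s .SH || s .BH

/-- K = {u : u ⊨ (U_BS ∧ U_BT) ∨ (U_BS ∧ U_SS ∧ U_ST)}. -/
def K : Set (Ctx (fun _ : XU => Bool)) :=
  {u | (u .uBS = true ∧ u .uBT = true) ∨ (u .uBS = true ∧ u .uSS = true ∧ u .uST = true)}

/-- The event BB = 1. -/
def φBB : Event (fun _ : XV => Bool) := fun s => s .BB = true

/-- The conjunction BS = 1 ∧ SS = 1. -/
def paBSSS : PA (fun _ : XV => Bool) := fun i =>
  match i with | .BS => some true | .SS => some true | _ => none

/-- The conjunction SS = 1 ∧ ST = 1. -/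
def paSSST : PA (fun _ : XV => Bool) := fun i =>
  match i with | .SS => some true | .ST => some true | _ => none

/-- The conjunction BT = 1. -/
def paBT : PA (fun _ : XV => Bool) := fun i =>
  match i with | .BT => some true | _ => none

open Causal XV

abbrev PB := Causal.PA (fun _ : XV => Bool)
abbrev CB := Causal.Ctx (fun _ : XU => Bool)

instance : Fintype XU := ⟨⟨{XU.uSS, XU.uST, XU.uBS, XU.uBT}, by decide⟩, fun x => by cases x <;> decide⟩
instance : Fintype XV :=
  ⟨⟨{XV.SS, XV.ST, XV.SH, XV.BS, XV.BT, XV.BH, XV.BB}, by decide⟩, fun x => by cases x <;> decide⟩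

def botP : PB := fun _ => none

def sSS (g : PB) (u : CB) : Bool := (g .SS).getD (u .uSS)
def sST (g : PB) (u : CB) : Bool := (g .ST).getD (u .uST)
def sBS (g : PB) (u : CB) : Bool := (g .BS).getD (u .uBS)
def sBT (g : PB) (u : CB) : Bool := (g .BT).getD (u .uBT)
def sSH (g : PB) (u : CB) : Bool := (g .SH).getD (sSS g u && sST g u)
def sBH (g : PB) (u : CB) : Bool := (g .BH).getD ((sBS g u && sBT g u) && !(sSH g u))
def sBB (g : PB) (u : CB) : Bool := (g .BB).getD (sSH g u || sBH g u)

def sol (g : PB) (u : CB) : World (fun _ : XV => Bool) := fun i =>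
  match i with
  | .SS => sSS g u | .ST => sST g u | .BS => sBS g u | .BT => sBT g u
  | .SH => sSH g u | .BH => sBH g u | .BB => sBB g u

lemma solves_sol (g : PB) (u : CB) : (M.intervene g).Solves u (sol g u) := by
  intro i; cases i <;> rfl

lemma solves_unique {g : PB} {u : CB} {s : World (fun _ : XV => Bool)}
    (h : (M.intervene g).Solves u s) : s = sol g u := by
  have h1 : s .SS = sSS g u := h .SS
  have h2 : s .ST = sST g u := h .ST
  have h3 : s .BS = sBS g u := h .BS
  have h4 : s .BT = sBT g u := h .BT
  have h5 : s .SH = sSH g u := by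
    have := h .SH
    rw [show (M.intervene g).F .SH u s = (g .SH).getD (s .SS && s .ST) from rfl, h1, h2] at this
    exact this
  have h6 : s .BH = sBH g u := by
    have := h .BH
    rw [show (M.intervene g).F .BH u s = (g .BH).getD ((s .BS && s .BT) && !(s .SH)) from rfl,
      h3, h4, h5] at this
    exact this
  have h7 : s .BB = sBB g u := by
    have := h .BB
    rw [show (M.intervene g).F .BB u s = (g .BB).getD (s .SH || s .BH) from rfl, h5, h6] at this
    exact this
  funext i; cases i <;> assumption

lemma sat_iff (g : PB) (u : CB) (φ : Event (fun _ : XV => Bool)) :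
    (M.intervene g).sat u φ ↔ φ (sol g u) :=
  ⟨fun h => h _ (solves_sol g u), fun h s hs => (solves_unique hs) ▸ h⟩

lemma M_eq : M = M.intervene botP := rfl

lemma Msat_iff (u : CB) (φ : Event (fun _ : XV => Bool)) :
    M.sat u φ ↔ φ (sol botP u) := by
  rw [M_eq]; exact sat_iff botP u φ


lemma sol_of_actual {w : PB} {u : CB}
    (hw : ∀ i v, w i = some v → sol botP u i = v) : sol w u = sol botP u := by
  have hSS : sSS w u = sSS botP u := by
    cases hh : w .SS with
    | none => simp [sSS, hh, botP]
    | some v => simpa [sSS, hh, botP, sol] using (hw .SS v hh).symm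
  have hST : sST w u = sST botP u := by
    cases hh : w .ST with
    | none => simp [sST, hh, botP]
    | some v => simpa [sST, hh, botP, sol] using (hw .ST v hh).symm
  have hBS : sBS w u = sBS botP u := by
    cases hh : w .BS with
    | none => simp [sBS, hh, botP]
    | some v => simpa [sBS, hh, botP, sol] using (hw .BS v hh).symm
  have hBT : sBT w u = sBT botP u := by
    cases hh : w .BT with
    | none => simp [sBT, hh, botP]
    | some v => simpa [sBT, hh, botP, sol] using (hw .BT v hh).symm
  have hSH : sSH w u = sSH botP u := by
    cases hh : w .SH with
    | none => simp [sSH, hh, botP, hSS, hST]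
    | some v => simpa [sSH, hh, botP, sol] using (hw .SH v hh).symm
  have hBH : sBH w u = sBH botP u := by
    cases hh : w .BH with
    | none => simp [sBH, hh, botP, hBS, hBT, hSH]
    | some v => simpa [sBH, hh, botP, sol] using (hw .BH v hh).symm
  have hBB : sBB w u = sBB botP u := by
    cases hh : w .BB with
    | none => simp [sBB, hh, botP, hSH, hBH]
    | some v => simpa [sBB, hh, botP, sol] using (hw .BB v hh).symm
  funext i; cases i <;> assumption

lemma not_weak_of_none (u : CB) (hbb : sBB botP u = true) {h : PB}
    (hn : ∀ j, h j = none) : ¬ WeakCause M u h φBB := by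
  rintro ⟨-, w, x', hdom, hw, hneg⟩
  have hx : ∀ j, x' j = none := by
    intro j
    have := hdom j
    rw [hn j] at this
    simpa using Option.not_isSome_iff_eq_none.mp (by simp [this])
  have hun : PA.union x' w = w := by
    funext j; show (x' j).orElse _ = w j; rw [hx j]; rfl
  rw [hun, sat_iff] at hneg
  rw [Msat_iff] at hw
  rw [sol_of_actual hw] at hneg
  exact hneg hbb

lemma sub_none {h c : PB} (hsub : PA.subset h c) (j : XV) (hj : c j = none) : h j = none := by
  cases hh : h j with
  | none => rfl
  | some b => rw [hsub j b hh] at hj; cases hj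

/-- singletons -/
def cSS1 : PB := fun j => match j with | .SS => some true | _ => none
def cST1 : PB := fun j => match j with | .ST => some true | _ => none
def cSH1 : PB := fun j => match j with | .SH => some true | _ => none
def cBH1 : PB := fun j => match j with | .BH => some true | _ => none
def cBB1 : PB := fun j => match j with | .BB => some true | _ => none
def cBS1 : PB := fun j => match j with | .BS => some true | _ => none
def cBT1 : PB := fun j => match j with | .BT => some true | _ => none
def xSS0 : PB := fun j => match j with | .SS => some false | _ => none
def xST0 : PB := fun j => match j with | .ST => some false | _ => none
def xSH0 : PB := fun j => match j with | .SH => some false | _ => none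
def xBH0 : PB := fun j => match j with | .BH => some false | _ => none
def xBB0 : PB := fun j => match j with | .BB => some false | _ => none
def xBS0 : PB := fun j => match j with | .BS => some false | _ => none
def xBT0 : PB := fun j => match j with | .BT => some false | _ => none
def wBH0 : PB := xBH0
def wSH0 : PB := xSH0
def pa2 : PB := fun j => match j with | .BS => some true | .BT => some true | _ => none

lemma ac3_single (u : CB) (i0 : XV) (c : PB) (hc1 : c i0 = some true)
    (hc0 : ∀ j, j ≠ i0 → c j = none) (hbb : sBB botP u = true) :
    ∀ h : PB, h.ssubset c → ¬ WeakCause M u h φBB := by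
  rintro h ⟨hsub, hne⟩
  refine not_weak_of_none u hbb ?_
  intro j
  by_cases hji : j = i0
  · subst hji
    cases hh : h j with
    | none => rfl
    | some b =>
      exfalso
      have hb := hsub j b hh
      rw [hc1] at hb
      obtain rfl : b = true := by injection hb with h'; exact h'.symm
      apply hne
      funext k
      by_cases hk : k = j
      · subst hk; rw [hh, hc1]
      · rw [hc0 k hk, sub_none hsub k (hc0 k hk)]
  · exact sub_none hsub j (hc0 j hji)

@[simp] lemma union_apply (g h : PB) (i : XV) : PA.union g h i = (g i).orElse (fun _ => h i) := rfl
@[simp] lemma some_orElse' (a : Bool) (f : Unit → Option Bool) : (some a).orElse f = some a := rfl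
@[simp] lemma none_orElse' (f : Unit → Option Bool) : (Option.none).orElse f = f () := rfl

lemma cause_SS (u : CB) (h1 : u .uSS = true) (h2 : u .uST = true) :
    ActualCause M u cSS1 φBB := by
  have hbb : sBB botP u = true := by simp [sBB, sSH, sSS, sST, botP, h1, h2]
  refine ⟨⟨(Msat_iff u _).mpr ⟨?_, hbb⟩, wBH0, xSS0, ?_, (Msat_iff u _).mpr ?_,
    (sat_iff _ u _).mpr ?_⟩, ?_⟩
  · intro i v hiv
    cases i <;> simp [cSS1] at hiv
    simpa [sol, sSS, botP, h1] using hiv.symm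
  · intro i; cases i <;> decide
  · intro i v hiv
    cases i <;> simp [wBH0, xBH0] at hiv
    simp [sol, sBH, sSH, sSS, sST, botP, h1, h2, ← hiv]
  · simp [φBB, sol, sBB, sSH, sBH, sSS, sST, sBS, sBT, PA.union, xSS0, wBH0, xBH0]
  · exact ac3_single u .SS cSS1 rfl (by intro j hj; cases j <;> first | rfl | exact absurd rfl hj) hbb

lemma cause_ST (u : CB) (h1 : u .uSS = true) (h2 : u .uST = true) :
    ActualCause M u cST1 φBB := by
  have hbb : sBB botP u = true := by simp [sBB, sSH, sSS, sST, botP, h1, h2]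
  refine ⟨⟨(Msat_iff u _).mpr ⟨?_, hbb⟩, wBH0, xST0, ?_, (Msat_iff u _).mpr ?_,
    (sat_iff _ u _).mpr ?_⟩, ?_⟩
  · intro i v hiv
    cases i <;> simp [cST1] at hiv
    simpa [sol, sST, botP, h2] using hiv.symm
  · intro i; cases i <;> decide
  · intro i v hiv
    cases i <;> simp [wBH0, xBH0] at hiv
    simp [sol, sBH, sSH, sSS, sST, botP, h1, h2, ← hiv]
  · simp [φBB, sol, sBB, sSH, sBH, sSS, sST, sBS, sBT, PA.union, xST0, wBH0, xBH0]
  · exact ac3_single u .ST cST1 rfl (by intro j hj; cases j <;> first | rfl | exact absurd rfl hj) hbb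

lemma cause_SH (u : CB) (h1 : u .uSS = true) (h2 : u .uST = true) :
    ActualCause M u cSH1 φBB := by
  have hbb : sBB botP u = true := by simp [sBB, sSH, sSS, sST, botP, h1, h2]
  refine ⟨⟨(Msat_iff u _).mpr ⟨?_, hbb⟩, wBH0, xSH0, ?_, (Msat_iff u _).mpr ?_,
    (sat_iff _ u _).mpr ?_⟩, ?_⟩
  · intro i v hiv
    cases i <;> simp [cSH1] at hiv
    simpa [sol, sSH, sSS, sST, botP, h1, h2] using hiv.symm
  · intro i; cases i <;> decide
  · intro i v hiv
    cases i <;> simp [wBH0, xBH0] at hiv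
    simp [sol, sBH, sSH, sSS, sST, botP, h1, h2, ← hiv]
  · simp [φBB, sol, sBB, sSH, sBH, sSS, sST, sBS, sBT, PA.union, xSH0, wBH0, xBH0]
  · exact ac3_single u .SH cSH1 rfl (by intro j hj; cases j <;> first | rfl | exact absurd rfl hj) hbb

lemma cause_BH (u : CB) (hbh : sBH botP u = true) :
    ActualCause M u cBH1 φBB := by
  have hbb : sBB botP u = true := by simp [sBB, botP, hbh]
  have hsh : (u .uSS && u .uST) = false := by
    have := hbh
    simp [sBH, sBS, sBT, sSH, sSS, sST, botP] at this
    rcases this.2 with h | h <;> simp [h]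
  refine ⟨⟨(Msat_iff u _).mpr ⟨?_, hbb⟩, botP, xBH0, ?_, (Msat_iff u _).mpr ?_,
    (sat_iff _ u _).mpr ?_⟩, ?_⟩
  · intro i v hiv
    cases i <;> simp [cBH1] at hiv
    simpa [sol, botP, hbh] using hiv.symm
  · intro i; cases i <;> decide
  · intro i v hiv
    simp [botP] at hiv
  · simp [φBB, sol, sBB, sSH, sBH, sSS, sST, sBS, sBT, PA.union, xBH0, botP, hsh]
  · exact ac3_single u .BH cBH1 rfl (by intro j hj; cases j <;> first | rfl | exact absurd rfl hj) hbb

lemma cause_BB (u : CB) (hbb : sBB botP u = true) :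
    ActualCause M u cBB1 φBB := by
  refine ⟨⟨(Msat_iff u _).mpr ⟨?_, hbb⟩, botP, xBB0, ?_, (Msat_iff u _).mpr ?_,
    (sat_iff _ u _).mpr ?_⟩, ?_⟩
  · intro i v hiv
    cases i <;> simp [cBB1] at hiv
    simpa [sol, botP, hbb] using hiv.symm
  · intro i; cases i <;> decide
  · intro i v hiv
    simp [botP] at hiv
  · simp [φBB, sol, sBB, PA.union, xBB0, botP]
  · exact ac3_single u .BB cBB1 rfl (by intro j hj; cases j <;> first | rfl | exact absurd rfl hj) hbb

lemma cause_BS (u : CB) (h1 : u .uBS = true) (h2 : u .uBT = true)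
    (h3 : (u .uSS && u .uST) = false) : ActualCause M u cBS1 φBB := by
  have hbb : sBB botP u = true := by
    simp [sBB, sBH, sSH, sSS, sST, sBS, sBT, botP, h1, h2, h3]
  refine ⟨⟨(Msat_iff u _).mpr ⟨?_, hbb⟩, botP, xBS0, ?_, (Msat_iff u _).mpr ?_,
    (sat_iff _ u _).mpr ?_⟩, ?_⟩
  · intro i v hiv
    cases i <;> simp [cBS1] at hiv
    simpa [sol, sBS, botP, h1] using hiv.symm
  · intro i; cases i <;> decide
  · intro i v hiv
    simp [botP] at hiv
  · simp [φBB, sol, sBB, sBH, sSH, sSS, sST, sBS, sBT, PA.union, xBS0, botP, h3]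
  · exact ac3_single u .BS cBS1 rfl (by intro j hj; cases j <;> first | rfl | exact absurd rfl hj) hbb

lemma cause_BT (u : CB) (h1 : u .uBS = true) (h2 : u .uBT = true)
    (h3 : (u .uSS && u .uST) = false) : ActualCause M u cBT1 φBB := by
  have hbb : sBB botP u = true := by
    simp [sBB, sBH, sSH, sSS, sST, sBS, sBT, botP, h1, h2, h3]
  refine ⟨⟨(Msat_iff u _).mpr ⟨?_, hbb⟩, botP, xBT0, ?_, (Msat_iff u _).mpr ?_,
    (sat_iff _ u _).mpr ?_⟩, ?_⟩
  · intro i v hiv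
    cases i <;> simp [cBT1] at hiv
    simpa [sol, sBT, botP, h2] using hiv.symm
  · intro i; cases i <;> decide
  · intro i v hiv
    simp [botP] at hiv
  · simp [φBB, sol, sBB, sBH, sSH, sSS, sST, sBS, sBT, PA.union, xBT0, botP, h3]
  · exact ac3_single u .BT cBT1 rfl (by intro j hj; cases j <;> first | rfl | exact absurd rfl hj) hbb

lemma L1 (u : CB) (h1 : u .uSS = true) (h2 : u .uST = true) (h3 : u .uBS = true)
    (c : PB) (hc : c .BS ≠ none ∨ c .BT ≠ none) : ¬ ActualCause M u c φBB := by
  rintro ⟨⟨hAC1, w, x', hdom, hw, hneg⟩, hmin⟩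
  obtain ⟨hev, hφ⟩ := (Msat_iff u _).mp hAC1
  have hφ' : sBB botP u = true := hφ
  replace hw := (Msat_iff u _).mp hw
  replace hneg := (sat_iff _ u _).mp hneg
  have hBBe : sBB (PA.union x' w) u = false := by
    simpa [φBB, sol] using hneg
  have hne : ∀ d : PB, d .BS = none → d .BT = none → d ≠ c := by
    intro d hd1 hd2 he
    rcases hc with hc | hc
    · exact hc (he ▸ hd1)
    · exact hc (he ▸ hd2)
  rcases hxBB : x' .BB with _ | b
  · rcases hwBB : w .BB with _ | b
    · -- BB computed
      have hor : sSH (PA.union x' w) u = false ∧ sBH (PA.union x' w) u = false := by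
        have := hBBe
        simpa [sBB, hxBB, hwBB] using this
      have hSHe := hor.1
      rcases hxSH : x' .SH with _ | b
      · rcases hwSH : w .SH with _ | b
        · -- SH computed
          have hss : sSS (PA.union x' w) u = false ∨ sST (PA.union x' w) u = false := by
            have h6 : (sSS (PA.union x' w) u && sST (PA.union x' w) u) = false := by
              simpa [sSH, hxSH, hwSH] using hSHe
            cases h7 : sSS (PA.union x' w) u
            · exact Or.inl rfl
            · rw [h7, Bool.true_and] at h6
              exact Or.inr h6
          rcases hss with hss | hss
          · rcases hxSS : x' .SS with _ | b
            · rcases hwSS : w .SS with _ | b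
              · rw [show sSS (PA.union x' w) u = u .uSS by simp [sSS, hxSS, hwSS], h1] at hss
                cases hss
              · have hb : b = true := by
                  have := hw .SS b hwSS
                  simpa [sol, sSS, botP, h1] using this.symm
                rw [show sSS (PA.union x' w) u = b by simp [sSS, hxSS, hwSS], hb] at hss
                cases hss
            · have hcs : (c .SS).isSome := by
                have h' := hdom .SS
                rw [hxSS] at h'
                exact h'.mp rfl
              obtain ⟨v, hv⟩ := Option.isSome_iff_exists.mp hcs
              have hv1 : v = true := by
                have h5 : sSS botP u = v := hev .SS v hv
                simpa [sSS, botP, h1] using h5.symm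
              refine hmin cSS1 ⟨?_, hne cSS1 rfl rfl⟩ (cause_SS u h1 h2).1
              intro j v' hj
              cases j <;> simp [cSS1] at hj
              rw [hj]; rw [hv, hv1]
          · rcases hxST : x' .ST with _ | b
            · rcases hwST : w .ST with _ | b
              · rw [show sST (PA.union x' w) u = u .uST by simp [sST, hxST, hwST], h2] at hss
                cases hss
              · have hb : b = true := by
                  have := hw .ST b hwST
                  simpa [sol, sST, botP, h2] using this.symm
                rw [show sST (PA.union x' w) u = b by simp [sST, hxST, hwST], hb] at hss
                cases hss
            · have hcs : (c .ST).isSome := by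
                have h' := hdom .ST
                rw [hxST] at h'
                exact h'.mp rfl
              obtain ⟨v, hv⟩ := Option.isSome_iff_exists.mp hcs
              have hv1 : v = true := by
                have h5 : sST botP u = v := hev .ST v hv
                simpa [sST, botP, h2] using h5.symm
              refine hmin cST1 ⟨?_, hne cST1 rfl rfl⟩ (cause_ST u h1 h2).1
              intro j v' hj
              cases j <;> simp [cST1] at hj
              rw [hj]; rw [hv, hv1]
        · -- w forces SH at actual value true
          have hb : b = true := by
            have := hw .SH b hwSH
            simpa [sol, sSH, sSS, sST, botP, h1, h2] using this.symm
          rw [show sSH (PA.union x' w) u = b by simp [sSH, hxSH, hwSH], hb] at hSHe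
          cases hSHe
      · -- x' forces SH, so SH ∈ dom c
        have hcs : (c .SH).isSome := by
          have h' := hdom .SH
          rw [hxSH] at h'
          exact h'.mp rfl
        obtain ⟨v, hv⟩ := Option.isSome_iff_exists.mp hcs
        have hv1 : v = true := by
          have h5 : sSH botP u = v := hev .SH v hv
          simpa [sSH, sSS, sST, botP, h1, h2] using h5.symm
        refine hmin cSH1 ⟨?_, hne cSH1 rfl rfl⟩ (cause_SH u h1 h2).1
        intro j v' hj
        cases j <;> simp [cSH1] at hj
        rw [hj]; rw [hv, hv1]
    · -- w forces BB at actual value true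
      have hb : b = true := by
        have := hw .BB b hwBB
        simpa [sol, botP, hφ'] using this.symm
      rw [show sBB (PA.union x' w) u = b by simp [sBB, hxBB, hwBB], hb] at hBBe
      cases hBBe
  · -- x' forces BB, so BB ∈ dom c
    have hcs : (c .BB).isSome := by
      have h' := hdom .BB
      rw [hxBB] at h'
      exact h'.mp rfl
    obtain ⟨v, hv⟩ := Option.isSome_iff_exists.mp hcs
    have hv1 : v = true := by
      have h5 : sBB botP u = v := hev .BB v hv
      rw [hφ'] at h5
      exact h5.symm
    refine hmin cBB1 ⟨?_, hne cBB1 rfl rfl⟩ (cause_BB u hφ').1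
    intro j v' hj
    cases j <;> simp [cBB1] at hj
    rw [hj]; rw [hv, hv1]

def u3 : CB := fun i => match i with | .uST => false | _ => true

lemma L2 (c : PB) (hc : c .SS ≠ none) : ¬ ActualCause M u3 c φBB := by
  rintro ⟨⟨hAC1, w, x', hdom, hw, hneg⟩, hmin⟩
  obtain ⟨hev, hφ⟩ := (Msat_iff u3 _).mp hAC1
  have hφ' : sBB botP u3 = true := hφ
  replace hw := (Msat_iff u3 _).mp hw
  replace hneg := (sat_iff _ u3 _).mp hneg
  have hBBe : sBB (PA.union x' w) u3 = false := by
    simpa [φBB, sol] using hneg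
  have hne : ∀ d : PB, d .SS = none → d ≠ c := by
    intro d hd he
    exact hc (he ▸ hd)
  rcases hxBB : x' .BB with _ | b
  · rcases hwBB : w .BB with _ | b
    · have hor : sSH (PA.union x' w) u3 = false ∧ sBH (PA.union x' w) u3 = false := by
        simpa [sBB, hxBB, hwBB] using hBBe
      rcases hxBH : x' .BH with _ | b
      · rcases hwBH : w .BH with _ | b
        · -- BH computed
          have h6 : (sBS (PA.union x' w) u3 && sBT (PA.union x' w) u3) = false := by
            simpa [sBH, hxBH, hwBH, hor.1] using hor.2
          have hss : sBS (PA.union x' w) u3 = false ∨ sBT (PA.union x' w) u3 = false := by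
            cases h7 : sBS (PA.union x' w) u3
            · exact Or.inl rfl
            · rw [h7, Bool.true_and] at h6
              exact Or.inr h6
          rcases hss with hss | hss
          · rcases hxBS : x' .BS with _ | b
            · rcases hwBS : w .BS with _ | b
              · rw [show sBS (PA.union x' w) u3 = u3 .uBS by simp [sBS, hxBS, hwBS]] at hss
                cases hss
              · have hb : b = true := by
                  have := hw .BS b hwBS
                  simpa [sol, sBS, botP, u3] using this.symm
                rw [show sBS (PA.union x' w) u3 = b by simp [sBS, hxBS, hwBS], hb] at hss
                cases hss
            · have hcs : (c .BS).isSome := by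
                have h' := hdom .BS
                rw [hxBS] at h'
                exact h'.mp rfl
              obtain ⟨v, hv⟩ := Option.isSome_iff_exists.mp hcs
              have hv1 : v = true := by
                have h5 : sBS botP u3 = v := hev .BS v hv
                simpa [sBS, botP, u3] using h5.symm
              refine hmin cBS1 ⟨?_, hne cBS1 rfl⟩ (cause_BS u3 rfl rfl (by decide)).1
              intro j v' hj
              cases j <;> simp [cBS1] at hj
              rw [hj]; rw [hv, hv1]
          · rcases hxBT : x' .BT with _ | b
            · rcases hwBT : w .BT with _ | b
              · rw [show sBT (PA.union x' w) u3 = u3 .uBT by simp [sBT, hxBT, hwBT]] at hss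
                cases hss
              · have hb : b = true := by
                  have := hw .BT b hwBT
                  simpa [sol, sBT, botP, u3] using this.symm
                rw [show sBT (PA.union x' w) u3 = b by simp [sBT, hxBT, hwBT], hb] at hss
                cases hss
            · have hcs : (c .BT).isSome := by
                have h' := hdom .BT
                rw [hxBT] at h'
                exact h'.mp rfl
              obtain ⟨v, hv⟩ := Option.isSome_iff_exists.mp hcs
              have hv1 : v = true := by
                have h5 : sBT botP u3 = v := hev .BT v hv
                simpa [sBT, botP, u3] using h5.symm
              refine hmin cBT1 ⟨?_, hne cBT1 rfl⟩ (cause_BT u3 rfl rfl (by decide)).1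
              intro j v' hj
              cases j <;> simp [cBT1] at hj
              rw [hj]; rw [hv, hv1]
        · -- w forces BH at actual value true
          have hb : b = true := by
            have := hw .BH b hwBH
            simpa [sol, sBH, sBS, sBT, sSH, sSS, sST, botP, u3] using this.symm
          rw [show sBH (PA.union x' w) u3 = b by simp [sBH, hxBH, hwBH], hb] at hor
          cases hor.2
      · -- x' forces BH
        have hcs : (c .BH).isSome := by
          have h' := hdom .BH
          rw [hxBH] at h'
          exact h'.mp rfl
        obtain ⟨v, hv⟩ := Option.isSome_iff_exists.mp hcs
        have hv1 : v = true := by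
          have h5 : sBH botP u3 = v := hev .BH v hv
          simpa [sBH, sBS, sBT, sSH, sSS, sST, botP, u3] using h5.symm
        refine hmin cBH1 ⟨?_, hne cBH1 rfl⟩ (cause_BH u3 (by decide)).1
        intro j v' hj
        cases j <;> simp [cBH1] at hj
        rw [hj]; rw [hv, hv1]
    · have hb : b = true := by
        have := hw .BB b hwBB
        simpa [sol, botP, hφ'] using this.symm
      rw [show sBB (PA.union x' w) u3 = b by simp [sBB, hxBB, hwBB], hb] at hBBe
      cases hBBe
  · have hcs : (c .BB).isSome := by
      have h' := hdom .BB
      rw [hxBB] at h'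
      exact h'.mp rfl
    obtain ⟨v, hv⟩ := Option.isSome_iff_exists.mp hcs
    have hv1 : v = true := by
      have h5 : sBB botP u3 = v := hev .BB v hv
      rw [hφ'] at h5
      exact h5.symm
    refine hmin cBB1 ⟨?_, hne cBB1 rfl⟩ (cause_BB u3 hφ').1
    intro j v' hj
    cases j <;> simp [cBB1] at hj
    rw [hj]; rw [hv, hv1]

def uA : CB := fun _ => true
def u2 : CB := fun i => match i with | .uBT => false | _ => true

lemma uA_K : uA ∈ K := Or.inl ⟨rfl, rfl⟩
lemma u2_K : u2 ∈ K := Or.inr ⟨rfl, rfl, rfl⟩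
lemma u3_K : u3 ∈ K := Or.inl ⟨rfl, rfl⟩

lemma part1 : ModExpl M K paBSSS φBB := by
  refine ⟨?_, ?_, uA, uA_K, (Msat_iff uA _).mpr ⟨?_, ?_⟩⟩
  · -- EX1'
    intro u hu
    constructor
    · intro hsat
      obtain ⟨hev, hφ⟩ := (Msat_iff u _).mp hsat
      have huSS : u .uSS = true := hev .SS true rfl
      have huBS : u .uBS = true := hev .BS true rfl
      cases hST : u .uST
      · have huBT : u .uBT = true := by
          rcases hu with ⟨_, h⟩ | ⟨_, _, h⟩
          · exact h
          · rw [h] at hST; cases hST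
        exact ⟨.BS, true, cBS1, rfl, rfl, cause_BS u huBS huBT (by simp [hST])⟩
      · exact ⟨.SS, true, cSS1, rfl, rfl, cause_SS u huSS hST⟩
    · refine (sat_iff _ u _).mpr ?_
      show sBB paBSSS u = true
      rcases hu with ⟨h1, h2⟩ | ⟨h1, h2, h3⟩
      · simp [sBB, sBH, sSH, sSS, sST, sBS, sBT, paBSSS, h2]
      · simp [sBB, sBH, sSH, sSS, sST, sBS, sBT, paBSSS, h3]
  · -- minimality EX3'
    rintro h ⟨hsub, hne⟩ hEX
    have hS : h .SS = none ∨ h .SS = some true := by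
      cases hh : h .SS with
      | none => exact Or.inl rfl
      | some b =>
        have := hsub .SS b hh
        simp [paBSSS] at this
        exact Or.inr (by rw [this])
    have hB : h .BS = none ∨ h .BS = some true := by
      cases hh : h .BS with
      | none => exact Or.inl rfl
      | some b =>
        have := hsub .BS b hh
        simp [paBSSS] at this
        exact Or.inr (by rw [this])
    have hrest : ∀ j, j ≠ XV.SS → j ≠ XV.BS → h j = none :=
      fun j hj1 hj2 => sub_none hsub j
        (by cases j <;> first | rfl | exact absurd rfl hj1 | exact absurd rfl hj2)
    rcases hS with hS | hS <;> rcases hB with hB | hB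
    · -- h empty
      have hnone : ∀ j, h j = none := by
        intro j
        cases j <;> first | exact hS | exact hB | exact hrest _ (by decide) (by decide)
      obtain ⟨i, v, c, hi, -, -⟩ := (hEX uA uA_K).1
        ((Msat_iff uA _).mpr ⟨fun i v hiv => by { rw [hnone i] at hiv; cases hiv }, rfl⟩)
      rw [hnone i] at hi
      cases hi
    · -- h = {BS = 1} : use context u2 = (1,1,1,0)
      have hevh : PA.event h (sol botP u2) := by
        intro i v hiv
        cases i
        case BS =>
          rw [hB] at hiv
          have : v = true := by simpa using hiv.symm
          subst this
          rfl
        case SS => rw [hS] at hiv; cases hiv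
        all_goals (rw [hrest _ (by decide) (by decide)] at hiv; cases hiv)
      obtain ⟨i, v, c, hi, hci, hc⟩ := (hEX u2 u2_K).1 ((Msat_iff u2 _).mpr ⟨hevh, rfl⟩)
      cases i
      case BS =>
        exact L1 u2 rfl rfl rfl c (Or.inl (by rw [hci]; simp)) hc
      case SS => rw [hS] at hi; cases hi
      all_goals (rw [hrest _ (by decide) (by decide)] at hi; cases hi)
    · -- h = {SS = 1} : use context u3 = (1,0,1,1)
      have hevh : PA.event h (sol botP u3) := by
        intro i v hiv
        cases i
        case SS =>
          rw [hS] at hiv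
          have : v = true := by simpa using hiv.symm
          subst this
          rfl
        case BS => rw [hB] at hiv; cases hiv
        all_goals (rw [hrest _ (by decide) (by decide)] at hiv; cases hiv)
      obtain ⟨i, v, c, hi, hci, hc⟩ := (hEX u3 u3_K).1 ((Msat_iff u3 _).mpr ⟨hevh, rfl⟩)
      cases i
      case SS =>
        exact L2 c (by rw [hci]; simp) hc
      case BS => rw [hB] at hi; cases hi
      all_goals (rw [hrest _ (by decide) (by decide)] at hi; cases hi)
    · -- h = paBSSS, contradicting strictness
      apply hne
      funext j
      cases j
      case SS => rw [hS]; rfl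
      case BS => rw [hB]; rfl
      all_goals (rw [hrest _ (by decide) (by decide)]; rfl)
  · -- existence: the event holds in uA
    intro i v hiv
    cases i <;> simp [paBSSS] at hiv <;>
      (try (subst hiv; rfl)) <;> (try (rw [← hiv]; rfl))
  · rfl

def uC : CB := fun i => match i with | .uSS => false | .uST => false | _ => true
def u5 : CB := fun i => match i with | .uSS => false | _ => true
def uN : CB := fun _ => false

lemma uC_K : uC ∈ K := Or.inl ⟨rfl, rfl⟩
lemma u5_K : u5 ∈ K := Or.inl ⟨rfl, rfl⟩

lemma sc3_pa2 : ∀ u', (M.intervene pa2).sat u' φBB := fun u' => (sat_iff _ u' _).mpr (by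
  show sBB pa2 u' = true
  cases h : (u' .uSS && u' .uST) <;>
    simp [sBB, sBH, sSH, sSS, sST, sBS, sBT, pa2, h])

lemma sc3_cBH1 : ∀ u', (M.intervene cBH1).sat u' φBB := fun u' => (sat_iff _ u' _).mpr (by
  show sBB cBH1 u' = true
  simp [sBB, sBH, cBH1])

lemma part2 (g : PB) (hp : PotBorner M K g φBB) : g .BS = none := by
  obtain ⟨⟨s, hdisj, hE2⟩, ⟨u1, hu1K, hu1⟩, hE4⟩ := hp
  by_contra hBS
  obtain ⟨v, hgBS⟩ := Option.ne_none_iff_exists'.mp hBS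
  obtain ⟨hev1, hφ1⟩ := (Msat_iff u1 _).mp hu1
  have hφ1' : sBB botP u1 = true := hφ1
  have huBS : u1 .uBS = true := by rcases hu1K with ⟨h, _⟩ | ⟨h, _⟩ <;> exact h
  have hv : v = true := by
    have h5 : u1 .uBS = v := hev1 .BS v hgBS
    rw [huBS] at h5
    exact h5.symm
  subst hv
  -- the supplementary conjunction s is trivial outside BB
  have hsA : PA.event s (sol botP uA) := (Msat_iff uA _).mp (hE2 uA uA_K).2
  have hsB : PA.event s (sol botP u2) := (Msat_iff u2 _).mp (hE2 u2 u2_K).2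
  have hsC : PA.event s (sol botP uC) := (Msat_iff uC _).mp (hE2 uC uC_K).2
  have hsSS : s .SS = none := by
    cases hh : s .SS with
    | none => rfl
    | some b =>
      have t1 : (true : Bool) = b := hsA .SS b hh
      have t2 : (false : Bool) = b := hsC .SS b hh
      rw [← t1] at t2; cases t2
  have hsST : s .ST = none := by
    cases hh : s .ST with
    | none => rfl
    | some b =>
      have t1 : (true : Bool) = b := hsA .ST b hh
      have t2 : (false : Bool) = b := hsC .ST b hh
      rw [← t1] at t2; cases t2
  have hsBT : s .BT = none := by
    cases hh : s .BT with
    | none => rfl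
    | some b =>
      have t1 : (true : Bool) = b := hsA .BT b hh
      have t2 : (false : Bool) = b := hsB .BT b hh
      rw [← t1] at t2; cases t2
  have hsSH : s .SH = none := by
    cases hh : s .SH with
    | none => rfl
    | some b =>
      have t1 : (true : Bool) = b := hsA .SH b hh
      have t2 : (false : Bool) = b := hsC .SH b hh
      rw [← t1] at t2; cases t2
  have hsBH : s .BH = none := by
    cases hh : s .BH with
    | none => rfl
    | some b =>
      have t1 : (false : Bool) = b := hsA .BH b hh
      have t2 : (true : Bool) = b := hsC .BH b hh
      rw [← t1] at t2; cases t2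
  have hsBS : s .BS = none := hdisj .BS (by rw [hgBS]; rfl)
  -- the sufficient cause q = g ∪ s at u1
  obtain ⟨⟨hSC1, hSC2, hSC3⟩, hSC4⟩ := (hE2 u1 hu1K).1 ((Msat_iff u1 _).mpr hev1)
  obtain ⟨hqev, -⟩ := (Msat_iff u1 _).mp hSC1
  have hSC3' : ∀ u', sBB (PA.union g s) u' = true :=
    fun u' => (sat_iff _ u' _).mp (hSC3 u')
  have hqBS : PA.union g s .BS = some true := by simp [hgBS]
  rcases hqBB : PA.union g s .BB with _ | b
  case some =>
    -- q contains BB = 1 : the singleton {BB = 1} is a smaller sufficient cause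
    have hb : b = true := by
      have h5 : sBB botP u1 = b := hqev .BB b hqBB
      rw [hφ1'] at h5
      exact h5.symm
    subst hb
    refine hSC4 cBB1 ⟨?_, ?_⟩ ⟨(Msat_iff u1 _).mpr ⟨?_, hφ1⟩,
      ⟨.BB, true, cBB1, rfl, rfl, cause_BB u1 hφ1'⟩,
      fun u' => (sat_iff _ u' _).mpr rfl⟩
    · intro j v' hj
      cases j <;> simp [cBB1] at hj
      rw [hj]; exact hqBB
    · intro he
      have := hqBS
      rw [← he] at this
      exact absurd this (by decide)
    · intro i v' hiv
      cases i <;> simp [cBB1] at hiv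
      rw [hiv]; exact hφ1'
  case none =>
  have hgBB : g .BB = none := by
    have h6 := hqBB
    rw [union_apply] at h6
    cases hg : g .BB with
    | none => rfl
    | some b => rw [hg] at h6; cases h6
  have hsBB : s .BB = none := by
    have h6 := hqBB
    rw [union_apply, hgBB] at h6
    exact h6
  have hqg : ∀ i, PA.union g s i = g i := by
    intro i
    cases hgi : g i with
    | some b => simp [hgi]
    | none =>
      rw [union_apply, hgi]
      show s i = none
      cases i <;> first | exact hsSS | exact hsST | exact hsBT | exact hsSH | exact hsBH | exact hsBS | exact hsBB
  have hgBS' : g .BS = some true := hgBS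
  -- case on SH ∈ q
  rcases hqSH : g .SH with _ | b
  case some =>
    have hbv : (u1 .uSS && u1 .uST) = b := hqev .SH b (by rw [hqg]; exact hqSH)
    cases b
    case true =>
      obtain ⟨huSS, huST⟩ := Bool.and_eq_true_iff.mp hbv
      refine hSC4 cSH1 ⟨?_, ?_⟩ ⟨(Msat_iff u1 _).mpr ⟨?_, hφ1⟩,
        ⟨.SH, true, cSH1, rfl, rfl, cause_SH u1 huSS huST⟩,
        fun u' => (sat_iff _ u' _).mpr rfl⟩
      · intro j v' hj
        cases j <;> simp [cSH1] at hj
        rw [hj, hqg]; exact hqSH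
      · intro he
        have := hqBS
        rw [← he] at this
        exact absurd this (by decide)
      · intro i v' hiv
        cases i <;> simp [cSH1] at hiv
        rw [hiv]; exact hbv
    case false =>
      rcases hqBH : g .BH with _ | b2
      case some =>
        cases b2
        case true =>
          have hbh : sBH botP u1 = true := hqev .BH true (by rw [hqg]; exact hqBH)
          refine hSC4 cBH1 ⟨?_, ?_⟩ ⟨(Msat_iff u1 _).mpr ⟨?_, hφ1⟩,
            ⟨.BH, true, cBH1, rfl, rfl, cause_BH u1 hbh⟩, sc3_cBH1⟩
          · intro j v' hj
            cases j <;> simp [cBH1] at hj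
            rw [hj, hqg]; exact hqBH
          · intro he
            have := hqBS
            rw [← he] at this
            exact absurd this (by decide)
          · intro i v' hiv
            cases i <;> simp [cBH1] at hiv
            rw [hiv]; exact hbh
        case false =>
          have h6 := hSC3' u1
          rw [show sBB (PA.union g s) u1 = false by
            simp [sBB, sSH, sBH, hqBB, hqg, hqSH, hqBH]] at h6
          cases h6
      case none =>
        rcases hqBT : g .BT with _ | b3
        case none =>
          have h6 := hSC3' uN
          rw [show sBB (PA.union g s) uN = false by
            simp [sBB, sSH, sBH, sBS, sBT, hqBB, hqg, hqSH, hqBH, hqBT, uN]] at h6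
          cases h6
        case some =>
          cases b3
          case false =>
            have h6 := hSC3' uN
            rw [show sBB (PA.union g s) uN = false by
              simp [sBB, sSH, sBH, sBS, sBT, hqBB, hqg, hqSH, hqBH, hqBT, uN]] at h6
            cases h6
          case true =>
            have huBT : u1 .uBT = true := hqev .BT true (by rw [hqg]; exact hqBT)
            refine hSC4 pa2 ⟨?_, ?_⟩ ⟨(Msat_iff u1 _).mpr ⟨?_, hφ1⟩,
              ⟨.BS, true, cBS1, rfl, rfl, cause_BS u1 huBS huBT hbv⟩, sc3_pa2⟩
            · intro j v' hj
              cases j <;> simp [pa2] at hj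
              case BS => rw [hj]; exact hqBS
              case BT => rw [hj, hqg]; exact hqBT
            · intro he
              have h7 := congrFun he XV.SH
              rw [hqg, hqSH] at h7
              exact absurd h7 (by decide)
            · intro i v' hiv
              cases i <;> simp [pa2] at hiv
              case BS => rw [hiv]; exact huBS
              case BT => rw [hiv]; exact huBT
  case none =>
    rcases Classical.em (g .SS = some true ∧ g .ST = some true) with hss | hss
    · -- {SS = 1, ST = 1} is a smaller sufficient cause
      have huSS : u1 .uSS = true := hqev .SS true (by rw [hqg]; exact hss.1)
      have huST : u1 .uST = true := hqev .ST true (by rw [hqg]; exact hss.2)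
      refine hSC4 paSSST ⟨?_, ?_⟩ ⟨(Msat_iff u1 _).mpr ⟨?_, hφ1⟩,
        ⟨.SS, true, cSS1, rfl, rfl, cause_SS u1 huSS huST⟩,
        fun u' => (sat_iff _ u' _).mpr (by
          show sBB paSSST u' = true
          simp [sBB, sSH, sSS, sST, paSSST])⟩
      · intro j v' hj
        cases j <;> simp [paSSST] at hj
        · rw [hj, hqg]; exact hss.1
        · rw [hj, hqg]; exact hss.2
      · intro he
        have h7 := congrFun he XV.BS
        rw [hqBS] at h7
        exact absurd h7 (by decide)
      · intro i v' hiv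
        cases i <;> simp [paSSST] at hiv
        · rw [hiv]; exact huSS
        · rw [hiv]; exact huST
    · -- SH cannot be forced on the Suzy side
      have hSHN : sSH (PA.union g s) uN = false := by
        rw [sSH, hqg, hqSH]
        show (sSS (PA.union g s) uN && sST (PA.union g s) uN) = false
        by_cases h1 : g .SS = some true
        · have h2 : sST (PA.union g s) uN = false := by
            rw [sST, hqg]
            rcases h3 : g .ST with _ | b2
            · rfl
            · cases b2
              · rfl
              · exact absurd ⟨h1, h3⟩ hss
          rw [h2, Bool.and_false]
        · have h2 : sSS (PA.union g s) uN = false := by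
            rw [sSS, hqg]
            rcases h3 : g .SS with _ | b2
            · rfl
            · cases b2
              · rfl
              · exact absurd h3 h1
          rw [h2, Bool.false_and]
      rcases hqBH : g .BH with _ | b2
      case some =>
        cases b2
        case true =>
          have hbh : sBH botP u1 = true := hqev .BH true (by rw [hqg]; exact hqBH)
          refine hSC4 cBH1 ⟨?_, ?_⟩ ⟨(Msat_iff u1 _).mpr ⟨?_, hφ1⟩,
            ⟨.BH, true, cBH1, rfl, rfl, cause_BH u1 hbh⟩, sc3_cBH1⟩
          · intro j v' hj
            cases j <;> simp [cBH1] at hj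
            rw [hj, hqg]; exact hqBH
          · intro he
            have := hqBS
            rw [← he] at this
            exact absurd this (by decide)
          · intro i v' hiv
            cases i <;> simp [cBH1] at hiv
            rw [hiv]; exact hbh
        case false =>
          have h6 := hSC3' uN
          rw [show sBB (PA.union g s) uN = false by
            simp [sBB, sBH, hqBB, hqg, hqBH, hSHN]] at h6
          cases h6
      case none =>
        rcases hqBT : g .BT with _ | b3
        case none =>
          have h6 := hSC3' uN
          rw [show sBB (PA.union g s) uN = false by
            simp [sBB, sBH, sBS, sBT, hqBB, hqg, hqBH, hqBT, hSHN, uN]] at h6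
          cases h6
        case some =>
          cases b3
          case false =>
            have h6 := hSC3' uN
            rw [show sBB (PA.union g s) uN = false by
              simp [sBB, sBH, sBS, sBT, hqBB, hqg, hqBH, hqBT, hSHN, uN]] at h6
            cases h6
          case true =>
            have huBT : u1 .uBT = true := hqev .BT true (by rw [hqg]; exact hqBT)
            cases hA : u1 .uSS && u1 .uST
            case false =>
              rcases Classical.em (g .SS = none ∧ g .ST = none) with hex | hex
              · -- q is exactly {BS = 1, BT = 1} : apply SC2 in the all-true context
                have hgevA : PA.event g (sol botP uA) := by
                  intro i w hiw
                  cases i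
                  case SS => rw [hex.1] at hiw; cases hiw
                  case ST => rw [hex.2] at hiw; cases hiw
                  case SH => rw [hqSH] at hiw; cases hiw
                  case BH => rw [hqBH] at hiw; cases hiw
                  case BB => rw [hgBB] at hiw; cases hiw
                  case BS => rw [hgBS'] at hiw; rw [← Option.some.inj hiw]; rfl
                  case BT => rw [hqBT] at hiw; rw [← Option.some.inj hiw]; rfl
                obtain ⟨⟨-, hA2, -⟩, -⟩ := (hE2 uA uA_K).1 ((Msat_iff uA _).mpr hgevA)
                obtain ⟨i, w, c, hiq, hic, hcause⟩ := hA2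
                rw [hqg] at hiq
                cases i
                case SS => rw [hex.1] at hiq; cases hiq
                case ST => rw [hex.2] at hiq; cases hiq
                case SH => rw [hqSH] at hiq; cases hiq
                case BH => rw [hqBH] at hiq; cases hiq
                case BB => rw [hgBB] at hiq; cases hiq
                case BS => exact L1 uA rfl rfl rfl c (Or.inl (by rw [hic]; simp)) hcause
                case BT => exact L1 uA rfl rfl rfl c (Or.inr (by rw [hic]; simp)) hcause
              · -- {BS = 1, BT = 1} is a strictly smaller sufficient cause at u1
                refine hSC4 pa2 ⟨?_, ?_⟩ ⟨(Msat_iff u1 _).mpr ⟨?_, hφ1⟩,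
                  ⟨.BS, true, cBS1, rfl, rfl, cause_BS u1 huBS huBT hA⟩, sc3_pa2⟩
                · intro j v' hj
                  cases j <;> simp [pa2] at hj
                  case BS => rw [hj]; exact hqBS
                  case BT => rw [hj, hqg]; exact hqBT
                · intro he
                  refine hex ⟨?_, ?_⟩
                  · have h7 := congrFun he XV.SS
                    rw [hqg] at h7
                    exact h7.symm
                  · have h7 := congrFun he XV.ST
                    rw [hqg] at h7
                    exact h7.symm
                · intro i v' hiv
                  cases i <;> simp [pa2] at hiv
                  case BS => rw [hiv]; exact huBS
                  case BT => rw [hiv]; exact huBT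
            case true =>
              obtain ⟨huSS, huST⟩ := Bool.and_eq_true_iff.mp hA
              rcases hgss : g .SS with _ | b4
              case none =>
                rcases hgst : g .ST with _ | b5
                case none =>
                  -- q is exactly {BS = 1, BT = 1} : apply SC2 at u1 (Suzy context)
                  obtain ⟨i, w, c, hiq, hic, hcause⟩ := hSC2
                  rw [hqg] at hiq
                  cases i
                  case SS => rw [hgss] at hiq; cases hiq
                  case ST => rw [hgst] at hiq; cases hiq
                  case SH => rw [hqSH] at hiq; cases hiq
                  case BH => rw [hqBH] at hiq; cases hiq
                  case BB => rw [hgBB] at hiq; cases hiq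
                  case BS => exact L1 u1 huSS huST huBS c (Or.inl (by rw [hic]; simp)) hcause
                  case BT => exact L1 u1 huSS huST huBS c (Or.inr (by rw [hic]; simp)) hcause
                case some =>
                  have hb5 : b5 = true := by
                    have h7 : u1 .uST = b5 := hqev .ST b5 (by rw [hqg]; exact hgst)
                    rw [huST] at h7
                    exact h7.symm
                  subst hb5
                  have hgev5 : PA.event g (sol botP u5) := by
                    intro i w hiw
                    cases i
                    case SS => rw [hgss] at hiw; cases hiw
                    case ST => rw [hgst] at hiw; rw [← Option.some.inj hiw]; rfl
                    case SH => rw [hqSH] at hiw; cases hiw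
                    case BH => rw [hqBH] at hiw; cases hiw
                    case BB => rw [hgBB] at hiw; cases hiw
                    case BS => rw [hgBS'] at hiw; rw [← Option.some.inj hiw]; rfl
                    case BT => rw [hqBT] at hiw; rw [← Option.some.inj hiw]; rfl
                  obtain ⟨⟨-, -, -⟩, hB4⟩ := (hE2 u5 u5_K).1 ((Msat_iff u5 _).mpr hgev5)
                  refine hB4 pa2 ⟨?_, ?_⟩ ⟨(Msat_iff u5 _).mpr ⟨?_, rfl⟩,
                    ⟨.BS, true, cBS1, rfl, rfl, cause_BS u5 rfl rfl rfl⟩, sc3_pa2⟩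
                  · intro j v' hj
                    cases j <;> simp [pa2] at hj
                    case BS => rw [hj]; exact hqBS
                    case BT => rw [hj, hqg]; exact hqBT
                  · intro he
                    have h7 := congrFun he XV.ST
                    rw [hqg, hgst] at h7
                    exact absurd h7 (by decide)
                  · intro i v' hiv
                    cases i <;> simp [pa2] at hiv
                    case BS => rw [hiv]; rfl
                    case BT => rw [hiv]; rfl
              case some =>
                have hb4 : b4 = true := by
                  have h7 : u1 .uSS = b4 := hqev .SS b4 (by rw [hqg]; exact hgss)
                  rw [huSS] at h7
                  exact h7.symm
                subst hb4
                have hgst : g .ST = none := by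
                  rcases h7 : g .ST with _ | b5
                  · rfl
                  · have h8 : u1 .uST = b5 := hqev .ST b5 (by rw [hqg]; exact h7)
                    rw [huST] at h8
                    rw [← h8] at h7
                    exact absurd ⟨hgss, h7⟩ hss
                have hgev3 : PA.event g (sol botP u3) := by
                  intro i w hiw
                  cases i
                  case SS => rw [hgss] at hiw; rw [← Option.some.inj hiw]; rfl
                  case ST => rw [hgst] at hiw; cases hiw
                  case SH => rw [hqSH] at hiw; cases hiw
                  case BH => rw [hqBH] at hiw; cases hiw
                  case BB => rw [hgBB] at hiw; cases hiw
                  case BS => rw [hgBS'] at hiw; rw [← Option.some.inj hiw]; rfl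
                  case BT => rw [hqBT] at hiw; rw [← Option.some.inj hiw]; rfl
                obtain ⟨⟨-, -, -⟩, hB4⟩ := (hE2 u3 u3_K).1 ((Msat_iff u3 _).mpr hgev3)
                refine hB4 pa2 ⟨?_, ?_⟩ ⟨(Msat_iff u3 _).mpr ⟨?_, rfl⟩,
                  ⟨.BS, true, cBS1, rfl, rfl, cause_BS u3 rfl rfl rfl⟩, sc3_pa2⟩
                · intro j v' hj
                  cases j <;> simp [pa2] at hj
                  case BS => rw [hj]; exact hqBS
                  case BT => rw [hj, hqg]; exact hqBT
                · intro he
                  have h7 := congrFun he XV.SS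
                  rw [hqg, hgss] at h7
                  exact absurd h7 (by decide)
                · intro i v' hiv
                  cases i <;> simp [pa2] at hiv
                  case BS => rw [hiv]; rfl
                  case BT => rw [hiv]; rfl

end SB

/-- in the Suzy and Billy model, BS = 1 ∧ SS = 1 is a modified HP
    explanation of BB = 1, but no potential Borner explanation of BB = 1 mentions
    the variable BS. -/
theorem sb_modExpl_vs_borner :
    Causal.ModExpl SB.M SB.K SB.paBSSS SB.φBB ∧
    ∀ g : Causal.PA (fun _ : SB.XV => Bool),
      Causal.PotBorner SB.M SB.K g SB.φBB → g SB.XV.BS = none := by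
  exact ⟨SB.part1, fun g hp => SB.part2 g hp⟩
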